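/- Let a < b, T > 0, let f : ℝ → ℝ be continuous, and let u : (−1,1)×(0,T) → (a,b) have continuous partial derivatives u_x, u_xx, u_t and satisfy u_t(ξ,t) = u_xx(ξ,t) + f(u(ξ,t)) u_x(ξ,t)³ and u_x(ξ,t) > 0 for all (ξ,t) ∈ (−1,1)×(0,T). Let x : (a,b)×(0,T) → (−1,1) have continuous partial derivatives x_u, x_uu, x_t and satisfy x(u(ξ,t),t) = ξ for all (ξ,t) ∈ (−1,1)×(0,T) and u(x(v,t),t) = v for all (v,t) ∈ (a,b)×(0,T). Then x_u(v,t) > 0 and x_t(v,t) = (x_uu(v,t) − f(v))/x_u(v,t)² for all (v,t) ∈ (a,b)×(0,T). -/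

import Mathlib

open Set

open Filter Topology

lemma chain_key {I J : Set ℝ} (hI : IsOpen I) (hIc : I.OrdConnected) (hJ : IsOpen J)
    (u ux : ℝ → ℝ → ℝ)
    (hux : ∀ ξ ∈ I, ∀ s ∈ J, HasDerivAt (fun ζ => u ζ s) (ux ξ s) ξ)
    (hcux : ContinuousOn (fun p : ℝ × ℝ => ux p.1 p.2) (I ×ˢ J))
    {g : ℝ → ℝ} {g' t : ℝ} (hg : HasDerivAt g g' t) (htJ : t ∈ J)
    (hgmem : ∀ s ∈ J, g s ∈ I) {ut' : ℝ}
    (hut : HasDerivAt (fun s => u (g t) s) ut' t) :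
    HasDerivAt (fun s => u (g s) s) (ux (g t) t * g' + ut') t := by
  set ξ := g t with hξdef
  have hξI : ξ ∈ I := hgmem t htJ
  have helper : ∀ s ∈ J, ∃ c, |c - ξ| ≤ |g s - ξ| ∧
      u (g s) s - u ξ s = ux c s * (g s - ξ) := by
    intro s hs
    have hgsI : g s ∈ I := hgmem s hs
    rcases lt_trichotomy (g s) ξ with h | h | h
    · have hsub : Icc (g s) ξ ⊆ I := hIc.out hgsI hξI
      obtain ⟨c, hc, hc2⟩ := exists_hasDerivAt_eq_slope (fun ζ => u ζ s) (fun ζ => ux ζ s) h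
        (fun ζ hζ => (hux ζ (hsub hζ) s hs).continuousAt.continuousWithinAt)
        (fun ζ hζ => hux ζ (hsub (Ioo_subset_Icc_self hζ)) s hs)
      refine ⟨c, ?_, ?_⟩
      · rw [abs_of_nonpos (by linarith [hc.2]), abs_of_nonpos (by linarith)]
        linarith [hc.1]
      · have hne : ξ - g s ≠ 0 := by linarith
        have := hc2
        field_simp at this
        linarith [this]
    · exact ⟨ξ, by simp [h], by simp [h]⟩
    · have hsub : Icc ξ (g s) ⊆ I := hIc.out hξI hgsI
      obtain ⟨c, hc, hc2⟩ := exists_hasDerivAt_eq_slope (fun ζ => u ζ s) (fun ζ => ux ζ s) h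
        (fun ζ hζ => (hux ζ (hsub hζ) s hs).continuousAt.continuousWithinAt)
        (fun ζ hζ => hux ζ (hsub (Ioo_subset_Icc_self hζ)) s hs)
      refine ⟨c, ?_, ?_⟩
      · rw [abs_of_nonneg (by linarith [hc.1]), abs_of_nonneg (by linarith)]
        linarith [hc.2]
      · have hne : g s - ξ ≠ 0 := by linarith
        have := hc2
        field_simp at this
        linarith [this]
  choose! c hc1 hc3 using helper
  have hJt : J ∈ 𝓝 t := hJ.mem_nhds htJ
  have hgc : Tendsto g (𝓝 t) (𝓝 ξ) := hg.continuousAt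
  have hcd : Tendsto (fun s => dist (c s) ξ) (𝓝 t) (𝓝 0) := by
    apply squeeze_zero' (Eventually.of_forall fun s => dist_nonneg)
      ((eventually_iff_exists_mem.mpr ⟨J, hJt, fun s hs => hc1 s hs |>.trans_eq' (Real.dist_eq _ _)⟩)) ?_
    · have h0 : Tendsto (fun s => g s - ξ) (𝓝 t) (𝓝 0) := by
        simpa using hgc.sub_const ξ
      simpa using h0.abs
  have hct : Tendsto c (𝓝 t) (𝓝 ξ) := tendsto_iff_dist_tendsto_zero.mpr hcd
  have hcont : ContinuousAt (fun p : ℝ × ℝ => ux p.1 p.2) (ξ, t) :=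
    hcux.continuousAt ((hI.prod hJ).mem_nhds ⟨hξI, htJ⟩)
  have hφ : Tendsto (fun s => ux (c s) s) (𝓝 t) (𝓝 (ux ξ t)) :=
    hcont.tendsto.comp (hct.prodMk_nhds tendsto_id)
  rw [hasDerivAt_iff_tendsto_slope] at hut ⊢
  have hslopeg : Tendsto (slope g t) (𝓝[≠] t) (𝓝 g') := hasDerivAt_iff_tendsto_slope.mp hg
  have main : Tendsto (fun s => ux (c s) s * slope g t s + slope (fun s => u ξ s) t s)
      (𝓝[≠] t) (𝓝 (ux ξ t * g' + ut')) :=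
    ((hφ.mono_left nhdsWithin_le_nhds).mul hslopeg).add hut
  refine main.congr' ?_
  filter_upwards [self_mem_nhdsWithin, mem_nhdsWithin_of_mem_nhds hJt] with s hst hsJ
  have hst' : s - t ≠ 0 := sub_ne_zero.mpr hst
  have key := hc3 s hsJ
  simp only [slope_def_field]
  field_simp
  ring_nf
  ring_nf at key
  linarith [key]


/-- Appendix A.1 (turning `u` into `x`): if `u` solves
`u_t = u_xx + f(u) u_x³` on `(-1,1) × (0,T)` with `u_x > 0`, takes values in
`(a,b)`, and `x` is its spatial inverse (with continuous partial derivatives),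
then `x_u > 0` and `x_t = (x_uu - f)/x_u²` on `(a,b) × (0,T)`. -/
theorem appendix_u_to_x (a b T : ℝ) (hab : a < b) (hT : 0 < T)
    (f : ℝ → ℝ) (hf : Continuous f)
    (u ux uxx ut : ℝ → ℝ → ℝ) (x xu xuu xt : ℝ → ℝ → ℝ)
    -- u maps into (a,b) and has continuous partial derivatives ux, uxx, ut
    (humaps : ∀ ξ ∈ Set.Ioo (-1:ℝ) 1, ∀ t ∈ Set.Ioo 0 T, u ξ t ∈ Set.Ioo a b)
    (hux : ∀ ξ ∈ Set.Ioo (-1:ℝ) 1, ∀ t ∈ Set.Ioo 0 T,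
      HasDerivAt (fun ζ => u ζ t) (ux ξ t) ξ)
    (huxx : ∀ ξ ∈ Set.Ioo (-1:ℝ) 1, ∀ t ∈ Set.Ioo 0 T,
      HasDerivAt (fun ζ => ux ζ t) (uxx ξ t) ξ)
    (hut : ∀ ξ ∈ Set.Ioo (-1:ℝ) 1, ∀ t ∈ Set.Ioo 0 T,
      HasDerivAt (fun s => u ξ s) (ut ξ t) t)
    (hcux : ContinuousOn (fun p : ℝ × ℝ => ux p.1 p.2) (Set.Ioo (-1:ℝ) 1 ×ˢ Set.Ioo 0 T))
    (hcuxx : ContinuousOn (fun p : ℝ × ℝ => uxx p.1 p.2) (Set.Ioo (-1:ℝ) 1 ×ˢ Set.Ioo 0 T))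
    (hcut : ContinuousOn (fun p : ℝ × ℝ => ut p.1 p.2) (Set.Ioo (-1:ℝ) 1 ×ˢ Set.Ioo 0 T))
    -- u solves the PDE and is strictly increasing in space
    (hpde : ∀ ξ ∈ Set.Ioo (-1:ℝ) 1, ∀ t ∈ Set.Ioo 0 T,
      ut ξ t = uxx ξ t + f (u ξ t) * (ux ξ t) ^ 3)
    (huxpos : ∀ ξ ∈ Set.Ioo (-1:ℝ) 1, ∀ t ∈ Set.Ioo 0 T, 0 < ux ξ t)
    -- x maps into (-1,1) and has continuous partial derivatives xu, xuu, xt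
    (hxmaps : ∀ v ∈ Set.Ioo a b, ∀ t ∈ Set.Ioo 0 T, x v t ∈ Set.Ioo (-1:ℝ) 1)
    (hxu : ∀ v ∈ Set.Ioo a b, ∀ t ∈ Set.Ioo 0 T,
      HasDerivAt (fun w => x w t) (xu v t) v)
    (hxuu : ∀ v ∈ Set.Ioo a b, ∀ t ∈ Set.Ioo 0 T,
      HasDerivAt (fun w => xu w t) (xuu v t) v)
    (hxt : ∀ v ∈ Set.Ioo a b, ∀ t ∈ Set.Ioo 0 T,
      HasDerivAt (fun s => x v s) (xt v t) t)
    (hcxu : ContinuousOn (fun p : ℝ × ℝ => xu p.1 p.2) (Set.Ioo a b ×ˢ Set.Ioo 0 T))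
    (hcxuu : ContinuousOn (fun p : ℝ × ℝ => xuu p.1 p.2) (Set.Ioo a b ×ˢ Set.Ioo 0 T))
    (hcxt : ContinuousOn (fun p : ℝ × ℝ => xt p.1 p.2) (Set.Ioo a b ×ˢ Set.Ioo 0 T))
    -- x(·,t) and u(·,t) are mutually inverse
    (hinv1 : ∀ ξ ∈ Set.Ioo (-1:ℝ) 1, ∀ t ∈ Set.Ioo 0 T, x (u ξ t) t = ξ)
    (hinv2 : ∀ v ∈ Set.Ioo a b, ∀ t ∈ Set.Ioo 0 T, u (x v t) t = v) :
    ∀ v ∈ Set.Ioo a b, ∀ t ∈ Set.Ioo 0 T,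
      0 < xu v t ∧ xt v t = (xuu v t - f v) / (xu v t) ^ 2 := by
  
  intro v hv t htt
  -- Step 1: ux (x w t) t * xu w t = 1 for all w ∈ (a,b)
  have key1 : ∀ w ∈ Set.Ioo a b, ux (x w t) t * xu w t = 1 := by
    intro w hw
    have hxw := hxmaps w hw t htt
    have h1 : HasDerivAt (fun w' => u (x w' t) t) (ux (x w t) t * xu w t) w :=
      by have := (hux (x w t) hxw t htt).comp w (hxu w hw t htt); exact this
    have heq : (fun w' => u (x w' t) t) =ᶠ[𝓝 w] id :=
      eventuallyEq_of_mem (isOpen_Ioo.mem_nhds hw) (fun z hz => hinv2 z hz t htt)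
    exact (h1.congr_of_eventuallyEq heq.symm).unique (hasDerivAt_id w)
  have hξ := hxmaps v hv t htt
  have huxp := huxpos (x v t) hξ t htt
  have hxup : 0 < xu v t := by nlinarith [key1 v hv]
  refine ⟨hxup, ?_⟩
  -- Step 2: second-derivative relation
  have key2 : uxx (x v t) t * xu v t * xu v t + ux (x v t) t * xuu v t = 0 := by
    have h1 : HasDerivAt (fun w => ux (x w t) t * xu w t)
        (uxx (x v t) t * xu v t * xu v t + ux (x v t) t * xuu v t) v :=
      by have := (((huxx (x v t) hξ t htt).comp v (hxu v hv t htt))).mul (hxuu v hv t htt); exact this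
    have heq : (fun w => ux (x w t) t * xu w t) =ᶠ[𝓝 v] (fun _ => (1:ℝ)) :=
      eventuallyEq_of_mem (isOpen_Ioo.mem_nhds hv) (fun z hz => key1 z hz)
    exact (h1.congr_of_eventuallyEq heq.symm).unique (hasDerivAt_const v 1)
  -- Step 3: time derivative via chain_key
  have key3 : ux (x v t) t * xt v t + ut (x v t) t = 0 := by
    have h1 : HasDerivAt (fun s => u (x v s) s)
        (ux (x v t) t * xt v t + ut (x v t) t) t :=
      chain_key isOpen_Ioo Set.ordConnected_Ioo isOpen_Ioo u ux hux hcux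
        (hxt v hv t htt) htt (fun s hs => hxmaps v hv s hs) (hut _ hξ t htt)
    have heq : (fun s => u (x v s) s) =ᶠ[𝓝 t] (fun _ => v) :=
      eventuallyEq_of_mem (isOpen_Ioo.mem_nhds htt) (fun s hs => hinv2 v hv s hs)
    exact (h1.congr_of_eventuallyEq heq.symm).unique (hasDerivAt_const t v)
  have hpd := hpde (x v t) hξ t htt
  rw [hinv2 v hv t htt] at hpd
  rw [eq_div_iff (by positivity)]
  linear_combination (xu v t)^3 * key3 - (xu v t)^3 * hpd - xu v t * key2 +
    (-(xt v t)*(xu v t)^2 + xuu v t -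
      f v*((ux (x v t) t*xu v t-1)^2 + 3*(ux (x v t) t*xu v t-1) + 3)) * key1 v hv
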